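/- For every integer t ≥ 2^64, the number of graphs on the labeled vertex set [t] that satisfy property 𝒫 is at least (3/4)·2^(binom(t,2)). Equivalently, the random graph G(t,1/2) satisfies property 𝒫 with probability at least 3/4. -/

import Mathlib

open Finset
open scoped Classical

/-- `P(X,Y)`: the number of unordered pairs `{x,y}` with `x ≠ y`, `x ∈ X`, `y ∈ Y`. -/
noncomputable def pairCount {V : Type*} (X Y : Finset V) : ℕ :=
  (((X ×ˢ Y).filter fun p => p.1 ≠ p.2).image fun p => ({p.1, p.2} : Finset V)).card

/-- `e(X,Y)`: the number of edges `{x,y}` of `G` with `x ∈ X` and `y ∈ Y`. -/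
noncomputable def edgeCount {V : Type*} (G : SimpleGraph V) (X Y : Finset V) : ℕ :=
  (((X ×ˢ Y).filter fun p => G.Adj p.1 p.2).image fun p => ({p.1, p.2} : Finset V)).card

/-- Property 𝒫: for all `X, Y` of size at least `√t` (where `t` is the number of
vertices), `|e(X,Y)/P(X,Y) − 1/2| < t^(−1/8)`. -/
def PropertyP {V : Type*} [Fintype V] (G : SimpleGraph V) : Prop :=
  ∀ X Y : Finset V,
    Real.sqrt (Fintype.card V) ≤ X.card → Real.sqrt (Fintype.card V) ≤ Y.card →
    |(edgeCount G X Y : ℝ) / (pairCount X Y : ℝ) - 1 / 2| <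
      (Fintype.card V : ℝ) ^ (-(1 / 8 : ℝ))


open Real


lemma count_inter {α : Type*} [DecidableEq α] (D S : Finset α) (hS : S ⊆ D) (k : ℕ) :
    (D.powerset.filter fun s => (s ∩ S).card = k).card
      = S.card.choose k * 2 ^ (D.card - S.card) := by
  have hcard : ((S.powersetCard k) ×ˢ (D \ S).powerset).card
      = S.card.choose k * 2 ^ (D.card - S.card) := by
    rw [card_product, card_powersetCard, card_powerset, card_sdiff_of_subset hS]
  rw [← hcard]
  apply card_bij' (fun s _ => (s ∩ S, s \ S)) (fun p _ => p.1 ∪ p.2)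
  · intro s hs
    simp only [mem_filter, mem_powerset] at hs
    simp only [mem_product, mem_powersetCard, mem_powerset]
    exact ⟨⟨inter_subset_right, hs.2⟩, fun x hx =>
      mem_sdiff.mpr ⟨hs.1 (mem_sdiff.mp hx).1, (mem_sdiff.mp hx).2⟩⟩
  · intro p hp
    simp only [mem_product, mem_powersetCard, mem_powerset] at hp
    obtain ⟨⟨ha, hak⟩, hb⟩ := hp
    have hbS : Disjoint p.2 S := by
      rw [disjoint_left]; intro x hx hxS
      exact (mem_sdiff.mp (hb hx)).2 hxS
    simp only [mem_filter, mem_powerset]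
    constructor
    · exact union_subset (ha.trans hS) (hb.trans sdiff_subset)
    · rw [union_inter_distrib_right, inter_eq_left.mpr ha,
        (disjoint_iff_inter_eq_empty.mp hbS), union_empty, hak]
  · intro s hs
    simp only [mem_filter, mem_powerset] at hs
    ext x; simp only [mem_union, mem_inter, mem_sdiff]; tauto
  · intro p hp
    simp only [mem_product, mem_powersetCard, mem_powerset] at hp
    obtain ⟨⟨ha, hak⟩, hb⟩ := hp
    have hbS : ∀ x ∈ p.2, x ∉ S := fun x hx => (mem_sdiff.mp (hb hx)).2
    have h1 : (p.1 ∪ p.2) ∩ S = p.1 := by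
      rw [union_inter_distrib_right, inter_eq_left.mpr ha]
      rw [disjoint_iff_inter_eq_empty.mp (disjoint_left.mpr hbS), union_empty]
    have h2 : (p.1 ∪ p.2) \ S = p.2 := by
      ext x; simp only [mem_sdiff, mem_union]
      constructor
      · rintro ⟨h | h, hns⟩
        · exact absurd (ha h) hns
        · exact h
      · intro hx; exact ⟨Or.inr hx, hbS x hx⟩
    rw [h1, h2]

/-- doubleton as Sym2.lift -/
noncomputable def dbl {V : Type*} : Sym2 V → Finset V :=
  Sym2.lift ⟨fun x y => ({x, y} : Finset V), fun x y => Finset.pair_comm x y⟩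

lemma dbl_injective {V : Type*} : Function.Injective (dbl (V := V)) := by
  intro e f
  induction e using Sym2.inductionOn with | hf x y =>
  induction f using Sym2.inductionOn with | hf a b =>
  simp only [dbl, Sym2.lift_mk]
  intro h
  have hx : x ∈ ({a, b} : Finset V) := by rw [← h]; simp
  have hy : y ∈ ({a, b} : Finset V) := by rw [← h]; simp
  have ha : a ∈ ({x, y} : Finset V) := by rw [h]; simp
  have hb : b ∈ ({x, y} : Finset V) := by rw [h]; simp
  simp only [mem_insert, mem_singleton] at hx hy ha hb
  rw [Sym2.eq_iff]
  tauto

lemma card_image_dbl {V : Type*} (T : Finset (V × V)) :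
    (T.image fun p => ({p.1, p.2} : Finset V)).card = (T.image fun p => Sym2.mk p.1 p.2).card := by
  have : (T.image fun p => ({p.1, p.2} : Finset V)) = (T.image fun p => Sym2.mk p.1 p.2).image dbl := by
    rw [image_image]; rfl
  rw [this, card_image_of_injective _ dbl_injective]

noncomputable def pairSym {V : Type*} (X Y : Finset V) : Finset (Sym2 V) :=
  ((X ×ˢ Y).filter fun p => p.1 ≠ p.2).image fun p => Sym2.mk p.1 p.2

lemma pairCount_eq {V : Type*} (X Y : Finset V) :
    pairCount X Y = (pairSym X Y).card := card_image_dbl _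

lemma edgeCount_eq {V : Type*} (G : SimpleGraph V) (X Y : Finset V)
    [Fintype V] :
    edgeCount G X Y = (G.edgeFinset ∩ pairSym X Y).card := by
  rw [edgeCount, card_image_dbl]
  congr 1
  ext e
  simp only [mem_image, mem_filter, mem_inter, SimpleGraph.mem_edgeFinset, pairSym,
    mem_image, mem_filter]
  constructor
  · rintro ⟨p, ⟨hp, hadj⟩, rfl⟩
    exact ⟨hadj, p, ⟨hp, hadj.ne⟩, rfl⟩
  · rintro ⟨he, p, ⟨hp, hne⟩, rfl⟩
    exact ⟨p, ⟨hp, he⟩, rfl⟩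


noncomputable def Dset (V : Type*) [Fintype V] : Finset (Sym2 V) :=
  univ.filter fun e => ¬ e.IsDiag

lemma card_Dset (V : Type*) [Fintype V] : (Dset V).card = (Fintype.card V).choose 2 := by
  rw [Dset, ← Fintype.card_subtype, Sym2.card_subtype_not_diag]

lemma graph_filter_card (V : Type*) [Fintype V] (p : Finset (Sym2 V) → Prop) :
    (univ.filter fun G : SimpleGraph V => p G.edgeFinset).card
      = ((Dset V).powerset.filter p).card := by
  apply card_bij (fun G _ => G.edgeFinset)
  · intro G hG
    simp only [mem_filter, mem_univ, true_and] at hG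
    simp only [mem_filter, mem_powerset]
    refine ⟨fun e he => ?_, hG⟩
    simp only [Dset, mem_filter, mem_univ, true_and]
    exact SimpleGraph.not_isDiag_of_mem_edgeFinset he
  · intro G₁ _ G₂ _ h
    exact SimpleGraph.edgeFinset_inj.mp h
  · intro s hs
    simp only [mem_filter, mem_powerset] at hs
    have hes : (SimpleGraph.fromEdgeSet (↑s : Set (Sym2 V))).edgeSet = ↑s := by
      rw [SimpleGraph.edgeSet_fromEdgeSet]
      apply _root_.sdiff_eq_self_iff_disjoint.mpr
      rw [Set.disjoint_left]
      rintro e hdiag hmem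
      have := hs.1 hmem
      simp only [Dset, mem_filter] at this
      exact this.2 hdiag
    refine ⟨SimpleGraph.fromEdgeSet ↑s, ?_, ?_⟩
    · have hef : ∀ inst : Fintype (SimpleGraph.fromEdgeSet (↑s : Set (Sym2 V))).edgeSet,
          @SimpleGraph.edgeFinset _ _ inst = s := fun inst => by
        rw [← Finset.coe_inj, SimpleGraph.coe_edgeFinset, hes]
      simp only [mem_filter, mem_univ, true_and]
      rw [hef]
      exact hs.2
    · rw [← Finset.coe_inj, SimpleGraph.coe_edgeFinset, hes]

lemma total_graph_card (V : Type*) [Fintype V] :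
    (univ : Finset (SimpleGraph V)).card = 2 ^ (Fintype.card V).choose 2 := by
  have := graph_filter_card V (fun _ => True)
  simpa [card_Dset] using this


lemma cosh_quartic {v : ℝ} (h0 : 0 ≤ v) (h1 : v ≤ 1) :
    exp v + exp (-v) ≤ 2 + v ^ 2 + v ^ 4 := by
  have hb1 := Real.exp_bound (x := v) (by rw [abs_of_nonneg h0]; exact h1) (n := 4) (by norm_num)
  have hb2 := Real.exp_bound (x := -v) (by rw [abs_neg, abs_of_nonneg h0]; exact h1)
    (n := 4) (by norm_num)
  have e1 : ∑ m ∈ range 4, v ^ m / m.factorial = 1 + v + v ^ 2 / 2 + v ^ 3 / 6 := by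
    simp [Finset.sum_range_succ, Nat.factorial]
  have e2 : ∑ m ∈ range 4, (-v) ^ m / m.factorial = 1 - v + v ^ 2 / 2 - v ^ 3 / 6 := by
    simp [Finset.sum_range_succ, Nat.factorial]; ring
  rw [e1, abs_of_nonneg h0] at hb1
  rw [e2, abs_neg, abs_of_nonneg h0] at hb2
  have a1 := (abs_sub_le_iff.mp hb1).1
  have a2 := (abs_sub_le_iff.mp hb2).1
  norm_num [Nat.factorial] at a1 a2
  nlinarith [pow_nonneg h0 4]

lemma one_add_exp_bound {u : ℝ} (h0 : 0 ≤ u) (h1 : u ≤ 1) :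
    1 + exp u ≤ 2 * exp (u / 2 + u ^ 2 / 8 + u ^ 4 / 32) := by
  have hv := cosh_quartic (v := u / 2) (by linarith) (by linarith)
  have key : 1 + exp u = exp (u / 2) * (exp (u / 2) + exp (-(u / 2))) := by
    rw [mul_add, ← Real.exp_add, ← Real.exp_add]
    norm_num
    ring
  rw [key]
  have h2 : exp (u / 2) + exp (-(u / 2)) ≤ 2 * exp (u ^ 2 / 8 + u ^ 4 / 32) := by
    have hle : (2 : ℝ) + (u / 2) ^ 2 + (u / 2) ^ 4 ≤ 2 * exp (u ^ 2 / 8 + u ^ 4 / 32) := by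
      have := Real.add_one_le_exp (u ^ 2 / 8 + u ^ 4 / 32)
      nlinarith
    exact hv.trans hle
  calc exp (u / 2) * (exp (u / 2) + exp (-(u / 2)))
      ≤ exp (u / 2) * (2 * exp (u ^ 2 / 8 + u ^ 4 / 32)) := by
        apply mul_le_mul_of_nonneg_left h2 (Real.exp_nonneg _)
    _ = 2 * exp (u / 2 + u ^ 2 / 8 + u ^ 4 / 32) := by
        have he : exp (u / 2 + u ^ 2 / 8 + u ^ 4 / 32)
            = exp (u / 2) * exp (u ^ 2 / 8 + u ^ 4 / 32) := by
          rw [← Real.exp_add]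
          congr 1
          ring
        rw [he]
        ring

lemma binom_tail_upper (n : ℕ) {ε : ℝ} (hε : 0 < ε) (hε2 : ε ≤ 1 / 16) :
    ∑ k ∈ (range (n + 1)).filter (fun k : ℕ => (1 / 2 + ε) * n ≤ (k : ℝ)),
      (n.choose k : ℝ) ≤ 2 ^ n * exp (-(ε ^ 2) * n) := by
  set x : ℝ := exp (4 * ε) with hx
  have hx1 : 1 ≤ x := by rw [hx, ← Real.exp_zero]; apply Real.exp_le_exp.mpr; positivity
  have step1 : ∀ k ∈ (range (n + 1)).filter (fun k : ℕ => (1 / 2 + ε) * n ≤ (k : ℝ)),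
      (n.choose k : ℝ) ≤ exp (-(4 * ε * ((1 / 2 + ε) * n))) * (x ^ k * n.choose k) := by
    intro k hk
    simp only [mem_filter, mem_range] at hk
    have hxk : exp (4 * ε * ((1 / 2 + ε) * n)) ≤ x ^ k := by
      rw [hx, ← Real.exp_nat_mul]
      apply Real.exp_le_exp.mpr
      have := hk.2
      nlinarith
    calc (n.choose k : ℝ) = exp (-(4 * ε * ((1 / 2 + ε) * n)))
          * (exp (4 * ε * ((1 / 2 + ε) * n)) * n.choose k) := by
          rw [← mul_assoc, ← Real.exp_add]; simp
      _ ≤ exp (-(4 * ε * ((1 / 2 + ε) * n))) * (x ^ k * n.choose k) := by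
          apply mul_le_mul_of_nonneg_left _ (Real.exp_nonneg _)
          apply mul_le_mul_of_nonneg_right hxk (by positivity)
  have step2 : ∑ k ∈ (range (n + 1)).filter (fun k : ℕ => (1 / 2 + ε) * n ≤ (k : ℝ)),
      (n.choose k : ℝ)
      ≤ exp (-(4 * ε * ((1 / 2 + ε) * n))) * (1 + x) ^ n := by
    calc ∑ k ∈ (range (n + 1)).filter (fun k : ℕ => (1 / 2 + ε) * n ≤ (k : ℝ)), (n.choose k : ℝ)
        ≤ ∑ k ∈ (range (n + 1)).filter (fun k : ℕ => (1 / 2 + ε) * n ≤ (k : ℝ)),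
            exp (-(4 * ε * ((1 / 2 + ε) * n))) * (x ^ k * n.choose k) :=
          Finset.sum_le_sum step1
      _ ≤ ∑ k ∈ range (n + 1), exp (-(4 * ε * ((1 / 2 + ε) * n))) * (x ^ k * n.choose k) := by
          apply Finset.sum_le_sum_of_subset_of_nonneg (filter_subset _ _)
          intro k _ _
          positivity
      _ = exp (-(4 * ε * ((1 / 2 + ε) * n))) * ∑ k ∈ range (n + 1), x ^ k * n.choose k := by
          rw [Finset.mul_sum]
      _ = exp (-(4 * ε * ((1 / 2 + ε) * n))) * (1 + x) ^ n := by
          rw [add_comm (1 : ℝ) x, add_pow]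
          congr 1
          apply Finset.sum_congr rfl
          intro k _
          simp [mul_assoc]
  have hbound : (1 + x) ^ n ≤ 2 ^ n * exp ((2 * ε + 2 * ε ^ 2 + 8 * ε ^ 4) * n) := by
    have h1x : 1 + x ≤ 2 * exp (2 * ε + 2 * ε ^ 2 + 8 * ε ^ 4) := by
      have := one_add_exp_bound (u := 4 * ε) (by positivity) (by linarith)
      convert this using 3
      ring
    calc (1 + x) ^ n ≤ (2 * exp (2 * ε + 2 * ε ^ 2 + 8 * ε ^ 4)) ^ n :=
          pow_le_pow_left₀ (by positivity) h1x n
      _ = 2 ^ n * exp ((2 * ε + 2 * ε ^ 2 + 8 * ε ^ 4) * n) := by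
          rw [mul_pow, ← Real.exp_nat_mul]; ring_nf
  calc ∑ k ∈ (range (n + 1)).filter (fun k : ℕ => (1 / 2 + ε) * n ≤ (k : ℝ)), (n.choose k : ℝ)
      ≤ exp (-(4 * ε * ((1 / 2 + ε) * n))) * ((2:ℝ) ^ n * exp ((2 * ε + 2 * ε ^ 2 + 8 * ε ^ 4) * n)) := by
        apply step2.trans
        apply mul_le_mul_of_nonneg_left hbound (Real.exp_nonneg _)
    _ = 2 ^ n * exp ((-2 * ε ^ 2 + 8 * ε ^ 4) * n) := by
        rw [← mul_assoc, mul_comm (exp _) ((2:ℝ) ^ n), mul_assoc, ← Real.exp_add]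
        congr 2
        ring
    _ ≤ 2 ^ n * exp (-(ε ^ 2) * n) := by
        apply mul_le_mul_of_nonneg_left _ (by positivity)
        apply Real.exp_le_exp.mpr
        apply mul_le_mul_of_nonneg_right _ (Nat.cast_nonneg n)
        nlinarith [sq_nonneg ε, mul_le_mul hε2 hε2 hε.le (by norm_num : (0:ℝ) ≤ 1/16)]

lemma binom_tail_lower (n : ℕ) {ε : ℝ} (hε : 0 < ε) (hε2 : ε ≤ 1 / 16) :
    ∑ k ∈ (range (n + 1)).filter (fun k : ℕ => (k : ℝ) ≤ (1 / 2 - ε) * n),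
      (n.choose k : ℝ) ≤ 2 ^ n * exp (-(ε ^ 2) * n) := by
  have := binom_tail_upper n hε hε2
  refine le_trans (le_of_eq ?_) this
  apply Finset.sum_nbij' (fun k => n - k) (fun k => n - k)
  · intro k hk
    simp only [mem_filter, mem_range] at hk ⊢
    have hkn : k ≤ n := Nat.lt_succ_iff.mp hk.1
    constructor
    · omega
    · have : ((n - k : ℕ) : ℝ) = (n : ℝ) - k := by
        rw [Nat.cast_sub hkn]
      rw [this]
      have := hk.2
      linarith
  · intro k hk
    simp only [mem_filter, mem_range] at hk ⊢
    have hkn : k ≤ n := Nat.lt_succ_iff.mp hk.1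
    have hc : ((n - k : ℕ) : ℝ) = (n : ℝ) - k := Nat.cast_sub hkn
    constructor
    · omega
    · rw [hc]
      have h2 := hk.2
      have hn0 : (0:ℝ) ≤ n := Nat.cast_nonneg n
      nlinarith
  · intro k hk
    simp only [mem_filter, mem_range] at hk
    omega
  · intro k hk
    simp only [mem_filter, mem_range] at hk
    omega
  · intro k hk
    simp only [mem_filter, mem_range] at hk
    rw [Nat.choose_symm (Nat.lt_succ_iff.mp hk.1)]


lemma sum_union_le' {s t : Finset ℕ} {f : ℕ → ℝ} (hf : ∀ k, 0 ≤ f k) :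
    ∑ k ∈ s ∪ t, f k ≤ ∑ k ∈ s, f k + ∑ k ∈ t, f k := by
  rw [← Finset.union_sdiff_self_eq_union, Finset.sum_union disjoint_sdiff]
  have h := Finset.sum_le_sum_of_subset_of_nonneg (sdiff_subset : t \ s ⊆ t)
    (fun k _ _ => hf k)
  linarith

lemma badXY_bound (V : Type*) [Fintype V] (X Y : Finset V) {ε : ℝ}
    (hε : 0 < ε) (hε2 : ε ≤ 1 / 16) :
    ((univ.filter fun G : SimpleGraph V =>
        ¬ |(edgeCount G X Y : ℝ) / (pairCount X Y : ℝ) - 1 / 2| < ε).card : ℝ)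
      ≤ 2 ^ ((Fintype.card V).choose 2 + 1) * exp (-(ε ^ 2) * (pairSym X Y).card) := by
  set S := pairSym X Y with hS
  set P := S.card with hP
  set M := (Fintype.card V).choose 2 with hM
  have hSD : S ⊆ Dset V := by
    intro e he
    simp only [hS, pairSym, mem_image, mem_filter] at he
    obtain ⟨p, ⟨_, hne⟩, rfl⟩ := he
    simp only [Dset, mem_filter, mem_univ, true_and, Sym2.mk_isDiag_iff]
    exact hne
  have hPM : P ≤ M := by
    rw [hP, hM, ← card_Dset V]
    exact card_le_card hSD
  have hsub : (univ.filter fun G : SimpleGraph V =>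
        ¬ |(edgeCount G X Y : ℝ) / (pairCount X Y : ℝ) - 1 / 2| < ε)
      ⊆ ((range (P + 1)).filter
          (fun k : ℕ => ¬ |(k : ℝ) / (P : ℝ) - 1 / 2| < ε)).biUnion
        (fun k => univ.filter fun G : SimpleGraph V => (G.edgeFinset ∩ S).card = k) := by
    intro G hG
    simp only [mem_filter, mem_univ, true_and] at hG
    rw [edgeCount_eq, pairCount_eq] at hG
    rw [mem_biUnion]
    refine ⟨(G.edgeFinset ∩ S).card, ?_, ?_⟩
    · simp only [mem_filter, mem_range]
      exact ⟨Nat.lt_succ_of_le (card_le_card inter_subset_right), hG⟩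
    · simp only [mem_filter, mem_univ, true_and]
  have hcount : ∀ k, ((univ.filter fun G : SimpleGraph V =>
      (G.edgeFinset ∩ S).card = k).card) = P.choose k * 2 ^ (M - P) := by
    intro k
    have h := graph_filter_card V (fun s => (s ∩ S).card = k)
    have h2 := count_inter (Dset V) S hSD k
    rw [card_Dset] at h2
    rw [← h2]
    convert h using 2 <;> congr!
  have hnat : (univ.filter fun G : SimpleGraph V =>
        ¬ |(edgeCount G X Y : ℝ) / (pairCount X Y : ℝ) - 1 / 2| < ε).card
      ≤ ∑ k ∈ (range (P + 1)).filter (fun k : ℕ => ¬ |(k : ℝ) / (P : ℝ) - 1 / 2| < ε),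
          P.choose k * 2 ^ (M - P) := by
    calc _ ≤ (((range (P + 1)).filter
          (fun k : ℕ => ¬ |(k : ℝ) / (P : ℝ) - 1 / 2| < ε)).biUnion
        (fun k => univ.filter fun G : SimpleGraph V =>
          (G.edgeFinset ∩ S).card = k)).card := card_le_card hsub
      _ ≤ _ := by
        refine (card_biUnion_le).trans ?_
        apply Finset.sum_le_sum
        intro k _
        rw [hcount k]
  have hsplit : ((range (P + 1)).filter (fun k : ℕ => ¬ |(k : ℝ) / (P : ℝ) - 1 / 2| < ε))
      ⊆ ((range (P + 1)).filter (fun k : ℕ => (1 / 2 + ε) * (P : ℝ) ≤ (k : ℝ)))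
        ∪ ((range (P + 1)).filter (fun k : ℕ => (k : ℝ) ≤ (1 / 2 - ε) * (P : ℝ))) := by
    intro k hk
    simp only [mem_filter, mem_range] at hk
    obtain ⟨hkP, hbad⟩ := hk
    rw [mem_union]
    by_cases hP0 : P = 0
    · right
      simp only [mem_filter, mem_range]
      have : k = 0 := by omega
      subst this
      simp [hP0]
    · have hPpos : (0 : ℝ) < P := by
        have : 0 < P := Nat.pos_of_ne_zero hP0
        exact_mod_cast this
      rcases le_abs.mp (not_lt.mp hbad) with h | h
      · left
        simp only [mem_filter, mem_range]
        refine ⟨hkP, ?_⟩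
        rw [← sub_nonneg]
        have h' : (1 / 2 + ε) ≤ (k : ℝ) / P := by linarith
        calc (0:ℝ) ≤ ((k : ℝ) / P - (1 / 2 + ε)) * P := by
              apply mul_nonneg (by linarith) hPpos.le
          _ = (k : ℝ) - (1 / 2 + ε) * P := by
              field_simp
      · right
        simp only [mem_filter, mem_range]
        refine ⟨hkP, ?_⟩
        have h' : (k : ℝ) / P ≤ 1 / 2 - ε := by linarith
        calc (k : ℝ) = ((k : ℝ) / P) * P := by
              field_simp
          _ ≤ (1 / 2 - ε) * P := mul_le_mul_of_nonneg_right h' hPpos.le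
  have hreal : ((univ.filter fun G : SimpleGraph V =>
        ¬ |(edgeCount G X Y : ℝ) / (pairCount X Y : ℝ) - 1 / 2| < ε).card : ℝ)
      ≤ (2:ℝ) ^ (M - P) * (2 * (2 ^ P * exp (-(ε ^ 2) * P))) := by
    have h1 : ((univ.filter fun G : SimpleGraph V =>
        ¬ |(edgeCount G X Y : ℝ) / (pairCount X Y : ℝ) - 1 / 2| < ε).card : ℝ)
        ≤ ∑ k ∈ (range (P + 1)).filter (fun k : ℕ => ¬ |(k : ℝ) / (P : ℝ) - 1 / 2| < ε),
            (P.choose k : ℝ) * 2 ^ (M - P) := by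
      calc _ ≤ ((∑ k ∈ (range (P + 1)).filter
            (fun k : ℕ => ¬ |(k : ℝ) / (P : ℝ) - 1 / 2| < ε),
            P.choose k * 2 ^ (M - P) : ℕ) : ℝ) := by exact_mod_cast hnat
        _ = _ := by push_cast; ring_nf
    refine h1.trans ?_
    have h2 : ∑ k ∈ (range (P + 1)).filter (fun k : ℕ => ¬ |(k : ℝ) / (P : ℝ) - 1 / 2| < ε),
        (P.choose k : ℝ) ≤ 2 * (2 ^ P * exp (-(ε ^ 2) * P)) := by
      calc _ ≤ ∑ k ∈ ((range (P + 1)).filter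
            (fun k : ℕ => (1 / 2 + ε) * (P : ℝ) ≤ (k : ℝ)))
          ∪ ((range (P + 1)).filter (fun k : ℕ => (k : ℝ) ≤ (1 / 2 - ε) * (P : ℝ))),
            (P.choose k : ℝ) :=
          Finset.sum_le_sum_of_subset_of_nonneg hsplit (fun k _ _ => by positivity)
        _ ≤ (∑ k ∈ (range (P + 1)).filter
              (fun k : ℕ => (1 / 2 + ε) * (P : ℝ) ≤ (k : ℝ)), (P.choose k : ℝ))
            + ∑ k ∈ (range (P + 1)).filter
              (fun k : ℕ => (k : ℝ) ≤ (1 / 2 - ε) * (P : ℝ)), (P.choose k : ℝ) :=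
          sum_union_le' (fun k => by positivity)
        _ ≤ 2 ^ P * exp (-(ε ^ 2) * P) + 2 ^ P * exp (-(ε ^ 2) * P) :=
          add_le_add (binom_tail_upper P hε hε2) (binom_tail_lower P hε hε2)
        _ = 2 * (2 ^ P * exp (-(ε ^ 2) * P)) := by ring
    calc ∑ k ∈ (range (P + 1)).filter (fun k : ℕ => ¬ |(k : ℝ) / (P : ℝ) - 1 / 2| < ε),
          (P.choose k : ℝ) * (2:ℝ) ^ (M - P)
        = (∑ k ∈ (range (P + 1)).filter (fun k : ℕ => ¬ |(k : ℝ) / (P : ℝ) - 1 / 2| < ε),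
          (P.choose k : ℝ)) * (2:ℝ) ^ (M - P) := by rw [Finset.sum_mul]
      _ ≤ (2 * (2 ^ P * exp (-(ε ^ 2) * P))) * (2:ℝ) ^ (M - P) := by
          apply mul_le_mul_of_nonneg_right h2 (by positivity)
      _ = (2:ℝ) ^ (M - P) * (2 * (2 ^ P * exp (-(ε ^ 2) * P))) := by ring
  refine hreal.trans (le_of_eq ?_)
  have hMP : (2:ℝ) ^ (M - P) * 2 ^ P = 2 ^ M := by
    rw [← pow_add, Nat.sub_add_cancel hPM]
  calc (2:ℝ) ^ (M - P) * (2 * (2 ^ P * exp (-(ε ^ 2) * P)))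
      = ((2:ℝ) ^ (M - P) * 2 ^ P) * 2 * exp (-(ε ^ 2) * P) := by ring
    _ = 2 ^ (M + 1) * exp (-(ε ^ 2) * P) := by
        rw [hMP]
        ring

lemma pairSym_lower {V : Type*} (X Y : Finset V) :
    (X.card - 1) * Y.card ≤ 2 * (pairSym X Y).card := by
  classical
  set T := (X ×ˢ Y).filter fun p => p.1 ≠ p.2 with hT
  have h1 : T.card ≤ 2 * (T.image (fun p => Sym2.mk p.1 p.2)).card := by
    apply Finset.card_le_mul_card_image
    intro a ha
    obtain ⟨p, hp, rfl⟩ := mem_image.mp ha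
    have hsub : T.filter (fun q => Sym2.mk q.1 q.2 = Sym2.mk p.1 p.2) ⊆ {p, p.swap} := by
      intro q hq
      simp only [mem_filter] at hq
      have := Sym2.mk_eq_mk_iff.mp hq.2
      simp only [mem_insert, mem_singleton]
      rcases this with h | h
      · left; exact h
      · right; rw [h]
    calc (T.filter (fun q => Sym2.mk q.1 q.2 = Sym2.mk p.1 p.2)).card
        ≤ ({p, p.swap} : Finset (V × V)).card := card_le_card hsub
      _ ≤ 2 := (card_insert_le _ _).trans (by simp)
  have h2 : X.card * Y.card ≤ T.card + Y.card := by
    have hpart : T.card + ((X ×ˢ Y).filter fun p => ¬ p.1 ≠ p.2).card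
        = X.card * Y.card := by
      rw [hT, Finset.card_filter_add_card_filter_not, card_product]
    have hdiag : ((X ×ˢ Y).filter fun p => ¬ p.1 ≠ p.2).card ≤ Y.card := by
      apply Finset.card_le_card_of_injOn (fun p => p.2)
      · intro p hp
        simp only [mem_coe, coe_filter, mem_filter, mem_product, Set.mem_setOf_eq] at hp
        exact hp.1.2
      · intro p hp q hq hpq
        simp only [coe_filter, Set.mem_setOf_eq, mem_product, not_not] at hp hq
        obtain ⟨⟨_, _⟩, hp2⟩ := hp
        obtain ⟨⟨_, _⟩, hq2⟩ := hq
        ext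
        · rw [hp2, hq2]; exact hpq
        · exact hpq
    omega
  have hps : pairSym X Y = T.image (fun p => Sym2.mk p.1 p.2) := rfl
  rw [hps]
  have hXY := Nat.mul_le_mul_right Y.card (Nat.le_refl X.card)
  -- (X.card - 1) * Y.card = X.card * Y.card - Y.card ≤ T.card ≤ 2 * image.card
  have : (X.card - 1) * Y.card ≤ T.card := by
    have := Nat.sub_mul X.card 1 Y.card
    omega
  omega

lemma exp_two_ge_four : (4:ℝ) ≤ exp 2 := by
  have h1 : (2:ℝ) ≤ exp 1 := by
    have := Real.add_one_le_exp 1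
    linarith
  have : exp 2 = exp 1 * exp 1 := by
    rw [← Real.exp_add]; norm_num
  nlinarith [Real.exp_pos 1]

lemma numeric_w {n : ℝ} (hn : (2:ℝ) ^ 64 ≤ n) : (256:ℝ) ≤ n ^ ((1:ℝ)/8) := by
  have h0 : (0:ℝ) < n := lt_of_lt_of_le (by positivity) hn
  have h1 : ((2:ℝ) ^ 64) ^ ((1:ℝ)/8) ≤ n ^ ((1:ℝ)/8) :=
    Real.rpow_le_rpow (by positivity) hn (by norm_num)
  have h2 : ((2:ℝ) ^ 64) ^ ((1:ℝ)/8) = 256 := by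
    rw [← Real.rpow_natCast (2:ℝ) 64, ← Real.rpow_mul (by norm_num)]
    norm_num
  linarith

lemma numeric_log {n : ℝ} (hn : (2:ℝ) ^ 64 ≤ n) :
    Real.log n ≤ n ^ ((1:ℝ)/4) / 32 := by
  have h0 : (0:ℝ) < n := lt_of_lt_of_le (by positivity) hn
  have hw := numeric_w hn
  have hwpos : (0:ℝ) < n ^ ((1:ℝ)/8) := Real.rpow_pos_of_pos h0 _
  have hlw : Real.log (n ^ ((1:ℝ)/8)) = (1/8) * Real.log n := Real.log_rpow h0 _
  have hlog8 : Real.log (n ^ ((1:ℝ)/8)) ≤ n ^ ((1:ℝ)/8) := by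
    have := Real.log_le_sub_one_of_pos hwpos
    linarith
  have hq : n ^ ((1:ℝ)/4) = n ^ ((1:ℝ)/8) * n ^ ((1:ℝ)/8) := by
    rw [← Real.rpow_add h0]; norm_num
  have : Real.log n ≤ 8 * n ^ ((1:ℝ)/8) := by
    rw [hlw] at hlog8; linarith
  have h8 : 8 * n ^ ((1:ℝ)/8) ≤ n ^ ((1:ℝ)/4) / 32 := by
    rw [hq]
    nlinarith
  linarith

lemma sum_A_bound {V : Type*} [Fintype V] (hn : (2:ℝ) ^ 64 ≤ (Fintype.card V : ℝ)) :
    ∑ X ∈ (univ : Finset V).powerset.filter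
        (fun X => Real.sqrt (Fintype.card V) ≤ (X.card : ℝ)),
      exp (-((Fintype.card V : ℝ) ^ ((1:ℝ)/4) / 8) * X.card) ≤ 1 / 4 := by
  set n : ℝ := (Fintype.card V : ℝ) with hndef
  set q : ℝ := n ^ ((1:ℝ)/4) with hqdef
  have h0 : (0:ℝ) < n := lt_of_lt_of_le (by positivity) hn
  have hw := numeric_w hn
  have hq : q = n ^ ((1:ℝ)/8) * n ^ ((1:ℝ)/8) := by
    rw [hqdef, ← Real.rpow_add h0]; norm_num
  have hq64 : (64:ℝ) ≤ q := by nlinarith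
  have hlog := numeric_log hn
  have hsqrt2 : (2:ℝ) ≤ Real.sqrt n := by
    rw [show (2:ℝ) = Real.sqrt 4 by
      rw [show (4:ℝ) = 2^2 by norm_num, Real.sqrt_sq (by norm_num)]]
    exact Real.sqrt_le_sqrt (by nlinarith)
  set g : Finset V → ℝ := fun X => if 1 ≤ X.card then exp (-(q/8) * X.card) else 0 with hg
  have hstep1 : ∑ X ∈ (univ : Finset V).powerset.filter
        (fun X => Real.sqrt n ≤ (X.card : ℝ)), exp (-(q/8) * X.card)
      ≤ ∑ X ∈ (univ : Finset V).powerset, g X := by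
    have heq : ∑ X ∈ (univ : Finset V).powerset.filter
        (fun X => Real.sqrt n ≤ (X.card : ℝ)), exp (-(q/8) * X.card)
        = ∑ X ∈ (univ : Finset V).powerset.filter
        (fun X => Real.sqrt n ≤ (X.card : ℝ)), g X := by
      apply Finset.sum_congr rfl
      intro X hX
      simp only [mem_filter] at hX
      have h2 : (2:ℝ) ≤ (X.card : ℝ) := le_trans hsqrt2 hX.2
      have : 1 ≤ X.card := by exact_mod_cast le_trans (by norm_num : (1:ℝ) ≤ 2) h2
      rw [hg]
      simp [this]
    rw [heq]
    apply Finset.sum_le_sum_of_subset_of_nonneg (filter_subset _ _)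
    intro X _ _
    rw [hg]
    dsimp only
    split <;> positivity
  have hstep2 : ∑ X ∈ (univ : Finset V).powerset, g X
      ≤ ((Fintype.card V : ℝ) + 1) * exp (-(3 * q / 32)) := by
    rw [Finset.sum_powerset]
    have hinner : ∀ j ∈ range ((univ : Finset V).card + 1),
        ∑ X ∈ Finset.powersetCard j (univ : Finset V), g X ≤ exp (-(3 * q / 32)) := by
      intro j hj
      have hcongr : ∀ X ∈ Finset.powersetCard j (univ : Finset V),
          g X = if 1 ≤ j then exp (-(q/8) * j) else 0 := by
        intro X hX
        have := (Finset.mem_powersetCard.mp hX).2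
        rw [hg]
        simp only [this]
      rw [Finset.sum_congr rfl hcongr, Finset.sum_const, Finset.card_powersetCard,
        nsmul_eq_mul]
      by_cases hj1 : 1 ≤ j
      · simp only [hj1, if_true]
        have hchoose : ((Fintype.card V).choose j : ℝ) ≤ n ^ j := by
          have h := Nat.choose_le_pow_div j (Fintype.card V) (α := ℝ)
          have hfact : (1:ℝ) ≤ (j.factorial : ℝ) := by
            exact_mod_cast Nat.one_le_iff_ne_zero.mpr (Nat.factorial_ne_zero j)
          calc ((Fintype.card V).choose j : ℝ) ≤ (n:ℝ) ^ j / (j.factorial : ℝ) := by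
                simpa [hndef] using h
            _ ≤ n ^ j := by
              rw [div_le_iff₀ (by positivity)]
              nlinarith [pow_nonneg h0.le j]
        have hnj : n ^ j = exp (j * Real.log n) := by
          rw [← Real.exp_log h0, ← Real.exp_nat_mul, Real.exp_log h0]
        calc ((Fintype.card V).choose j : ℝ) * exp (-(q/8) * j)
            ≤ n ^ j * exp (-(q/8) * j) := by
              apply mul_le_mul_of_nonneg_right hchoose (Real.exp_nonneg _)
          _ = exp (j * Real.log n + -(q/8) * j) := by
              rw [hnj, ← Real.exp_add]
          _ ≤ exp (-(3 * q / 32)) := by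
              apply Real.exp_le_exp.mpr
              have hj1' : (1:ℝ) ≤ (j:ℝ) := by exact_mod_cast hj1
              have : j * Real.log n + -(q/8) * j = (j:ℝ) * (Real.log n - q/8) := by ring
              rw [this]
              have hneg : Real.log n - q/8 ≤ -(3 * q/32) := by linarith
              calc (j:ℝ) * (Real.log n - q/8) ≤ (j:ℝ) * (-(3 * q/32)) := by
                    apply mul_le_mul_of_nonneg_left hneg (by linarith)
                _ ≤ 1 * (-(3 * q/32)) := by
                    apply mul_le_mul_of_nonpos_right hj1'
                    linarith
                _ = -(3 * q/32) := by ring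
      · simp only [hj1, if_false, mul_zero]
        positivity
    calc ∑ j ∈ range ((univ : Finset V).card + 1),
          ∑ X ∈ Finset.powersetCard j (univ : Finset V), g X
        ≤ ∑ j ∈ range ((univ : Finset V).card + 1), exp (-(3 * q / 32)) :=
          Finset.sum_le_sum hinner
      _ = ((univ : Finset V).card + 1) * exp (-(3 * q / 32)) := by
          rw [Finset.sum_const, card_range, nsmul_eq_mul]
          push_cast
          ring
      _ = ((Fintype.card V : ℝ) + 1) * exp (-(3 * q / 32)) := by
          rw [Finset.card_univ]
  have hstep3 : ((Fintype.card V : ℝ) + 1) * exp (-(3 * q / 32)) ≤ 1/4 := by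
    have hn1 : n + 1 ≤ exp (2 * Real.log n) := by
      have h2 : exp (2 * Real.log n) = n ^ 2 := by
        rw [show (2:ℝ) * Real.log n = Real.log n + Real.log n by ring, Real.exp_add,
          Real.exp_log h0]
        ring
      rw [h2]
      nlinarith
    calc ((Fintype.card V : ℝ) + 1) * exp (-(3 * q / 32))
        ≤ exp (2 * Real.log n) * exp (-(3 * q / 32)) := by
          apply mul_le_mul_of_nonneg_right _ (Real.exp_nonneg _)
          exact hn1
      _ = exp (2 * Real.log n - 3 * q / 32) := by rw [← Real.exp_add]; ring_nf
      _ ≤ exp (-2) := by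
          apply Real.exp_le_exp.mpr
          have : 2 * Real.log n ≤ q / 16 := by linarith
          linarith
      _ ≤ 1/4 := by
          rw [Real.exp_neg, show ((1:ℝ)/4) = (4:ℝ)⁻¹ by norm_num]
          apply inv_anti₀ (by norm_num) exp_two_ge_four
  calc _ ≤ ∑ X ∈ (univ : Finset V).powerset, g X := hstep1
    _ ≤ _ := le_trans hstep2 hstep3

lemma main_generic (V : Type*) [Fintype V] (hn : 2 ^ 64 ≤ Fintype.card V) :
    (3 / 4 : ℝ) * 2 ^ ((Fintype.card V).choose 2)
      ≤ Nat.card {G : SimpleGraph V // PropertyP G} := by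
  have hnR : (2:ℝ) ^ 64 ≤ (Fintype.card V : ℝ) := by exact_mod_cast hn
  set c := Fintype.card V with hc
  set n : ℝ := (c : ℝ) with hn'
  have h0 : (0:ℝ) < n := lt_of_lt_of_le (by positivity) hnR
  have hw := numeric_w hnR
  set ε : ℝ := n ^ (-(1 / 8 : ℝ)) with hε
  have hεpos : 0 < ε := Real.rpow_pos_of_pos h0 _
  have hε16 : ε ≤ 1 / 16 := by
    rw [hε, Real.rpow_neg h0.le]
    rw [show (1:ℝ)/16 = (16:ℝ)⁻¹ by norm_num]
    apply inv_anti₀ (by norm_num)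
    linarith
  set q : ℝ := n ^ ((1:ℝ)/4) with hqdef
  have hqpos : 0 < q := Real.rpow_pos_of_pos h0 _
  have hqw : q = n ^ ((1:ℝ)/8) * n ^ ((1:ℝ)/8) := by
    rw [hqdef, ← Real.rpow_add h0]; norm_num
  have hq64 : (64:ℝ) ≤ q := by nlinarith
  have hε2 : ε ^ 2 = q⁻¹ := by
    rw [hε, hqdef, ← Real.rpow_natCast (n ^ (-(1/8:ℝ))) 2, ← Real.rpow_mul h0.le]
    rw [show (-(1/8:ℝ)) * ((2:ℕ):ℝ) = -(1/4:ℝ) by push_cast; ring]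
    exact Real.rpow_neg h0.le _
  have hqq : q * q = Real.sqrt n := by
    rw [Real.sqrt_eq_rpow, hqdef, ← Real.rpow_add h0]; norm_num
  have hsqrt2 : (2:ℝ) ≤ Real.sqrt n := by
    rw [show (2:ℝ) = Real.sqrt 4 by
      rw [show (4:ℝ) = 2^2 by norm_num, Real.sqrt_sq (by norm_num)]]
    exact Real.sqrt_le_sqrt (by nlinarith)
  set A : Finset (Finset V) := (univ : Finset V).powerset.filter
      (fun X => Real.sqrt n ≤ (X.card : ℝ)) with hA
  set M := c.choose 2 with hM
  set bad := univ.filter fun G : SimpleGraph V => ¬ PropertyP G with hbad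
  have hsub : bad ⊆ (A ×ˢ A).biUnion (fun XY => univ.filter fun G : SimpleGraph V =>
      ¬ |(edgeCount G XY.1 XY.2 : ℝ) / (pairCount XY.1 XY.2 : ℝ) - 1 / 2| < ε) := by
    intro G hG
    rw [hbad, mem_filter] at hG
    simp only [mem_univ, true_and, PropertyP] at hG
    push_neg at hG
    obtain ⟨X, Y, hX, hY, hlt⟩ := hG
    rw [mem_biUnion]
    refine ⟨(X, Y), ?_, ?_⟩
    · rw [mem_product]
      constructor
      · rw [hA, mem_filter]
        exact ⟨mem_powerset.mpr (subset_univ X), hX⟩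
      · rw [hA, mem_filter]
        exact ⟨mem_powerset.mpr (subset_univ Y), hY⟩
    · simp only [mem_filter, mem_univ, true_and, not_lt]
      exact hlt
  -- per-pair exponential bound
  have hpair : ∀ XY : Finset V × Finset V, XY ∈ A ×ˢ A →
      exp (-(ε ^ 2) * ((pairSym XY.1 XY.2).card : ℝ))
        ≤ exp (-(q/8) * XY.1.card) * exp (-(q/8) * XY.2.card) := by
    rintro ⟨X, Y⟩ hXY
    rw [mem_product] at hXY
    obtain ⟨hXA, hYA⟩ := hXY
    rw [hA, mem_filter] at hXA hYA
    set a : ℝ := (X.card : ℝ) with ha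
    set b : ℝ := (Y.card : ℝ) with hb
    have hsa : Real.sqrt n ≤ a := hXA.2
    have hsb : Real.sqrt n ≤ b := hYA.2
    have ha2 : (2:ℝ) ≤ a := le_trans hsqrt2 hsa
    have hb2 : (2:ℝ) ≤ b := le_trans hsqrt2 hsb
    have hc1 : 1 ≤ X.card := by
      have h1a : (1:ℝ) ≤ (X.card : ℝ) := by rw [← ha]; linarith
      exact_mod_cast h1a
    have hPl := pairSym_lower X Y
    have hPr : (a - 1) * b ≤ 2 * ((pairSym X Y).card : ℝ) := by
      have : ((X.card - 1 : ℕ) : ℝ) = a - 1 := by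
        rw [Nat.cast_sub hc1]; norm_num; exact ha.symm
      calc (a - 1) * b = (((X.card - 1) * Y.card : ℕ) : ℝ) := by
            push_cast [this]; ring
        _ ≤ ((2 * (pairSym X Y).card : ℕ) : ℝ) := by exact_mod_cast hPl
        _ = 2 * ((pairSym X Y).card : ℝ) := by push_cast; ring
    rw [← Real.exp_add]
    apply Real.exp_le_exp.mpr
    have key : (q/8) * (a + b) ≤ ε ^ 2 * ((pairSym X Y).card : ℝ) := by
      rw [hε2, show q⁻¹ * ((pairSym X Y).card : ℝ) = ((pairSym X Y).card : ℝ) / q by ring,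
        le_div_iff₀ hqpos]
      have hs2 : q * q ≤ a := by rw [hqq]; exact hsa
      have hs3 : q * q ≤ b := by rw [hqq]; exact hsb
      nlinarith [mul_nonneg (sub_nonneg.mpr ha2) (by linarith : (0:ℝ) ≤ b),
        mul_nonneg (sub_nonneg.mpr hs2) (by linarith : (0:ℝ) ≤ b),
        mul_nonneg (sub_nonneg.mpr hs3) (by linarith : (0:ℝ) ≤ a)]
    linarith
  -- count bad graphs
  have hbadR : (bad.card : ℝ) ≤ 2 ^ (M + 1) * (1/4) ^ 2 := by
    have h1 : bad.card ≤ ∑ XY ∈ A ×ˢ A, (univ.filter fun G : SimpleGraph V =>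
        ¬ |(edgeCount G XY.1 XY.2 : ℝ) / (pairCount XY.1 XY.2 : ℝ) - 1 / 2| < ε).card :=
      le_trans (card_le_card hsub) card_biUnion_le
    have h2 : (bad.card : ℝ) ≤ ∑ XY ∈ A ×ˢ A, ((univ.filter fun G : SimpleGraph V =>
        ¬ |(edgeCount G XY.1 XY.2 : ℝ) / (pairCount XY.1 XY.2 : ℝ) - 1 / 2| < ε).card : ℝ) := by
      exact_mod_cast h1
    have h3 : (bad.card : ℝ) ≤ ∑ XY ∈ A ×ˢ A,
        2 ^ (M + 1) * (exp (-(q/8) * XY.1.card) * exp (-(q/8) * XY.2.card)) := by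
      refine h2.trans (Finset.sum_le_sum ?_)
      intro XY hXY
      calc _ ≤ (2:ℝ) ^ (M + 1) * exp (-(ε ^ 2) * ((pairSym XY.1 XY.2).card : ℝ)) :=
            badXY_bound V XY.1 XY.2 hεpos hε16
        _ ≤ _ := by
            apply mul_le_mul_of_nonneg_left (hpair XY hXY) (by positivity)
    have h4 : ∑ XY ∈ A ×ˢ A,
        2 ^ (M + 1) * (exp (-(q/8) * XY.1.card) * exp (-(q/8) * XY.2.card))
        = 2 ^ (M + 1) * (∑ X ∈ A, exp (-(q/8) * X.card)) ^ 2 := by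
      rw [← Finset.mul_sum]
      congr 1
      rw [sq, Finset.sum_mul_sum]
      rw [Finset.sum_product]
    have h5 : ∑ X ∈ A, exp (-(q/8) * X.card) ≤ 1/4 := by
      have := sum_A_bound (V := V) hnR
      convert this using 2 <;> rw [hA, hqdef]
    rw [h4] at h3
    refine h3.trans ?_
    have h6 : (0:ℝ) ≤ ∑ X ∈ A, exp (-(q/8) * X.card) :=
      Finset.sum_nonneg fun X _ => Real.exp_nonneg _
    apply mul_le_mul_of_nonneg_left _ (by positivity)
    apply pow_le_pow_left₀ h6 h5
  -- total count
  have hcards : (univ.filter fun G : SimpleGraph V => PropertyP G).card + bad.card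
      = 2 ^ M := by
    rw [hbad, Finset.card_filter_add_card_filter_not, total_graph_card V]
  have hNat : (Nat.card {G : SimpleGraph V // PropertyP G} : ℝ)
      = ((univ.filter fun G : SimpleGraph V => PropertyP G).card : ℝ) := by
    rw [Nat.card_eq_fintype_card, Fintype.card_subtype]
  rw [hNat]
  have hgood : ((univ.filter fun G : SimpleGraph V => PropertyP G).card : ℝ)
      = 2 ^ M - (bad.card : ℝ) := by
    have : ((univ.filter fun G : SimpleGraph V => PropertyP G).card : ℝ) + (bad.card : ℝ)
        = 2 ^ M := by exact_mod_cast hcards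
    linarith
  rw [hgood]
  have hM2 : (2:ℝ) ^ (M + 1) * (1/4) ^ 2 = 2 ^ M / 8 := by
    rw [pow_succ]; ring
  rw [hM2] at hbadR
  have h2Mpos : (0:ℝ) < 2 ^ M := by positivity
  linarith

theorem stmt3 (t : ℕ) (ht : 2 ^ 64 ≤ t) :
    (3 / 4 : ℝ) * 2 ^ t.choose 2 ≤ Nat.card {G : SimpleGraph (Fin t) // PropertyP G} := by
  have hcard : Fintype.card (Fin t) = t := Fintype.card_fin t
  have h := main_generic (Fin t) (by rw [hcard]; exact ht)
  rw [hcard] at h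
  exact h
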